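/- arXiv:1408.3694 — 9 statements merged into one kernel-verified Lean document; each statement's English description precedes it below -/
import Mathlib

section
/- (Higman's lemma) For any finite set Σ, the poset Σ* of finite words over Σ, ordered by the subword (subsequence) relation, is well partially ordered. -/
/-- Higman's lemma: for a finite alphabet `Σ`, the poset of finite words over
`Σ` ordered by the subword (subsequence) relation is well partially ordered. -/
theorem higman_lemma {σ : Type*} [Finite σ] (f : ℕ → List σ) :
    ∃ i j : ℕ, i < j ∧ (f i).Sublist (f j) := by
  have hs : (Set.univ : Set σ).PartiallyWellOrderedOn (· = ·) :=
    Set.Finite.partiallyWellOrderedOn Set.finite_univ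
  have h := hs.partiallyWellOrderedOn_sublistForall₂ (· = ·)
  obtain ⟨i, j, hij, hsub⟩ := h (fun n => ⟨f n, by simp⟩)
  refine ⟨i, j, hij, ?_⟩
  obtain ⟨l, hall, hl⟩ := List.sublistForall₂_iff.1 hsub
  rw [List.forall₂_eq_eq_eq] at hall; have hall' : f i = l := hall; rw [hall']; exact hl
end

section
/- For a finite set Σ, the poset Σ̃* is well partially ordered, where Σ̃* has the finite words over Σ as elements and s_1⋯s_n ≤ s'_1⋯s'_m iff there is a strictly increasing f: {1,...,n} → {1,...,m} with s'_{f(i)} = s_i for all i, and additionally for every j in {1,...,m} there exists i with f(i) ≤ j and s'_j = s'_{f(i)}. -/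
/-- The order on words from the variant of Higman's lemma:
`l ≤ l'` iff there is a strictly increasing `f` with `l'_{f(i)} = l_i` for all `i`,
and for every position `j` of `l'` there is an `i` with `f(i) ≤ j` and
`l'_j = l'_{f(i)}`. -/
def TildeWordLE {σ : Type*} (l l' : List σ) : Prop :=
  ∃ f : Fin l.length → Fin l'.length, StrictMono f ∧
    (∀ i, l'.get (f i) = l.get i) ∧
    (∀ j : Fin l'.length, ∃ i, (f i : ℕ) ≤ (j : ℕ) ∧ l'.get j = l'.get (f i))

/-- Annotation of a word: each letter is tagged with the set of letters of the whole
word and the set of letters strictly before it. -/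
noncomputable def tildeAnn {σ : Type*} (l : List σ) : List (Set σ × σ × Set σ) :=
  List.ofFn (fun i : Fin l.length => ({a | a ∈ l}, l.get i, {a | a ∈ l.take i}))

theorem tildeAnn_length {σ : Type*} (l : List σ) : (tildeAnn l).length = l.length := by
  simp [tildeAnn]

theorem tildeAnn_get {σ : Type*} (l : List σ) (i : Fin (tildeAnn l).length) :
    (tildeAnn l).get i =
      ({a | a ∈ l}, l.get (Fin.cast (tildeAnn_length l) i),
        {a | a ∈ l.take (i : ℕ)}) := by
  simp only [tildeAnn, List.get_eq_getElem, List.getElem_ofFn]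
  exact List.get_ofFn _ _

theorem mem_take_iff_get {σ : Type*} (l : List σ) (n : ℕ) (a : σ) :
    a ∈ l.take n ↔ ∃ i : Fin l.length, (i : ℕ) < n ∧ l.get i = a := by
  constructor
  · intro h
    obtain ⟨i, hi, hia⟩ := List.mem_iff_getElem.1 h
    rw [List.length_take] at hi
    have hi2 : i < l.length := lt_of_lt_of_le hi (by simp [min_le_right])
    refine ⟨⟨i, hi2⟩, lt_of_lt_of_le hi (min_le_left _ _), ?_⟩
    rw [← hia]
    simp [List.getElem_take]
  · rintro ⟨i, hin, rfl⟩
    have : (i : ℕ) < (l.take n).length := by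
      simp [List.length_take, hin, i.2]
    refine List.mem_iff_getElem.2 ⟨i, this, ?_⟩
    simp [List.getElem_take]

/-- Key lemma: if `l` is nonempty and the annotation of `l` is a sublist of
the annotation of `l'`, then `TildeWordLE l l'`. -/
theorem tildeWordLE_of_ann_sublist {σ : Type*} {l l' : List σ} (hne : l ≠ [])
    (h : List.Sublist (tildeAnn l) (tildeAnn l')) : TildeWordLE l l' := by
  obtain ⟨f, hf⟩ := List.sublist_iff_exists_fin_orderEmbedding_get_eq.1 h
  refine ⟨fun i => Fin.cast (tildeAnn_length l') (f (Fin.cast (tildeAnn_length l).symm i)),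
    ?_, ?_, ?_⟩
  case _ =>
    intro a b hab
    have h1 : Fin.cast (tildeAnn_length l).symm a < Fin.cast (tildeAnn_length l).symm b := by
      rw [Fin.lt_def, Fin.coe_cast, Fin.coe_cast]
      exact hab
    have h2 := f.strictMono h1
    rw [Fin.lt_def, Fin.coe_cast, Fin.coe_cast]
    exact h2
  case _ =>
    intro i
    have H := hf (Fin.cast (tildeAnn_length l).symm i)
    rw [tildeAnn_get, tildeAnn_get, Prod.mk.injEq, Prod.mk.injEq] at H
    obtain ⟨h1, h2, h3⟩ := H
    simp only [Fin.cast_cast, Fin.cast_eq_self] at h2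
    exact h2.symm
  case _ =>
    intro j
    -- common facts
    have key : ∀ i : Fin l.length,
        {a | a ∈ l} = {a | a ∈ l'} ∧
        {a | a ∈ l.take (i : ℕ)} =
          {a | a ∈ l'.take ((f (Fin.cast (tildeAnn_length l).symm i) : ℕ))} := by
      intro i
      have H := hf (Fin.cast (tildeAnn_length l).symm i)
      rw [tildeAnn_get, tildeAnn_get, Prod.mk.injEq, Prod.mk.injEq] at H
      obtain ⟨h1, h2, h3⟩ := H
      simp only [Fin.coe_cast] at h3
      exact ⟨h1, h3⟩
    have hgetf : ∀ i : Fin l.length,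
        l'.get (Fin.cast (tildeAnn_length l') (f (Fin.cast (tildeAnn_length l).symm i)))
          = l.get i := by
      intro i
      have H := hf (Fin.cast (tildeAnn_length l).symm i)
      rw [tildeAnn_get, tildeAnn_get, Prod.mk.injEq, Prod.mk.injEq] at H
      obtain ⟨h1, h2, h3⟩ := H
      simpa only [Fin.cast_cast, Fin.cast_eq_self] using h2.symm
    obtain ⟨a0, t, rfl⟩ := List.exists_cons_of_ne_nil hne
    have i00 : Fin (a0 :: t).length := ⟨0, by simp⟩
    have hsets : {a | a ∈ l'} = {a | a ∈ (a0 :: t)} := ((key i00).1).symm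
    have hcmem : l'.get j ∈ (a0 :: t) := by
      have : l'.get j ∈ {a | a ∈ l'} := by simp [List.get_mem]
      rw [hsets] at this
      exact this
    classical
    have hex : ∃ n : ℕ, ∃ hn : n < (a0 :: t).length, (a0 :: t).get ⟨n, hn⟩ = l'.get j := by
      obtain ⟨i, hi⟩ := List.mem_iff_get.1 hcmem
      exact ⟨i, i.2, hi⟩
    obtain ⟨hn0lt, hn0get⟩ := Nat.find_spec hex
    set i0 : Fin (a0 :: t).length := ⟨Nat.find hex, hn0lt⟩ with hi0
    have hnotbefore : l'.get j ∉ (a0 :: t).take (i0 : ℕ) := by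
      intro hmem
      obtain ⟨k, hk, hkget⟩ := (mem_take_iff_get _ _ _).1 hmem
      have := Nat.find_min hex (m := (k : ℕ)) hk
      push_neg at this
      exact (this k.2) hkget
    refine ⟨i0, ?_, ?_⟩
    · by_contra hlt
      push_neg at hlt
      simp only [Fin.coe_cast] at hlt
      have hjmem : l'.get j ∈
          l'.take ((f (Fin.cast (tildeAnn_length (a0 :: t)).symm i0) : ℕ)) :=
        (mem_take_iff_get _ _ _).2 ⟨j, hlt, rfl⟩
      have h3 := (key i0).2
      have : l'.get j ∈ {a | a ∈ (a0 :: t).take (i0 : ℕ)} := by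
        rw [h3]; exact hjmem
      exact hnotbefore this
    · rw [hgetf i0, hn0get]

/-- For a finite alphabet `σ`, the poset `σ̃*` is well partially ordered. -/
theorem tilde_words_wpo {σ : Type*} [Finite σ] (w : ℕ → List σ) :
    ∃ i j : ℕ, i < j ∧ TildeWordLE (w i) (w j) := by
  classical
  by_cases hinf : {n : ℕ | w n = []}.Infinite
  · obtain ⟨i, hi⟩ := hinf.nonempty
    obtain ⟨j, hj, hij⟩ := hinf.exists_gt i
    refine ⟨i, j, hij, ?_⟩
    rw [hi, hj]
    exact ⟨Fin.elim0, fun a => a.elim0, fun i => i.elim0, fun j => j.elim0⟩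
  · rw [Set.not_infinite] at hinf
    obtain ⟨N, hN⟩ := hinf.bddAbove
    have hne : ∀ n, w (N + 1 + n) ≠ [] := by
      intro n hc
      have : N + 1 + n ≤ N := hN hc
      omega
    -- Higman's lemma on the finite alphabet of annotations
    have hpwo : (Set.univ : Set (Set σ × σ × Set σ)).PartiallyWellOrderedOn (· = ·) :=
      Set.Finite.partiallyWellOrderedOn Set.finite_univ
    have hlists := hpwo.partiallyWellOrderedOn_sublistForall₂ (· = ·)
    obtain ⟨i, j, hij, hsub⟩ := hlists.exists_lt (f := fun n => tildeAnn (w (N + 1 + n)))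
      (fun n x _ => Set.mem_univ x)
    have hsub' : List.Sublist (tildeAnn (w (N + 1 + i))) (tildeAnn (w (N + 1 + j))) := by
      obtain ⟨m, hm1, hm2⟩ := List.sublistForall₂_iff.1 hsub
      rw [List.forall₂_eq_eq_eq] at hm1
      rwa [hm1]
    exact ⟨N + 1 + i, N + 1 + j, by omega,
      tildeWordLE_of_ann_sublist (hne i) hsub'⟩
end

section
/- Let Φ: C → D be a functor between small categories that is essentially surjective and finite (meaning Φ*(P_{D,y}) is a finitely generated C-module for every object y of D). If the category of C-modules over a ring k is Noetherian, then the category of D-modules over k is Noetherian. -/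
open CategoryTheory

universe u

variable (C : Type u) [Category.{u} C] (k : Type u) [Ring k]

/-- A family of submodules of the values of a functor `M : C ⥤ Mod_k` forms a
subfunctor when it is preserved by all the maps of `M`. -/
def IsSubfunctor (M : C ⥤ ModuleCat.{u} k)
    (N : ∀ c : C, Submodule k (M.obj c)) : Prop :=
  ∀ {c c' : C} (f : c ⟶ c') (x : M.obj c), x ∈ N c → M.map f x ∈ N c'

/-- A `C`-module (functor `C ⥤ Mod_k`) is finitely generated if finitely many
elements generate it: the only subfunctor containing them is the whole module. -/
def IsFinitelyGenerated (M : C ⥤ ModuleCat.{u} k) : Prop :=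
  ∃ (n : ℕ) (c : Fin n → C) (x : ∀ i, M.obj (c i)),
    ∀ N : ∀ d : C, Submodule k (M.obj d), IsSubfunctor C k M N →
      (∀ i, x i ∈ N (c i)) → ∀ d : C, N d = ⊤

/-- A subfunctor is finitely generated if finitely many of its elements
generate it. -/
def SubfunctorFG (M : C ⥤ ModuleCat.{u} k)
    (N : ∀ c : C, Submodule k (M.obj c)) : Prop :=
  ∃ (n : ℕ) (c : Fin n → C) (x : ∀ i, M.obj (c i)),
    (∀ i, x i ∈ N (c i)) ∧
    ∀ N' : ∀ d : C, Submodule k (M.obj d), IsSubfunctor C k M N' →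
      (∀ d : C, N' d ≤ N d) → (∀ i, x i ∈ N' (c i)) → ∀ d : C, N' d = N d

/-- The category of `C`-modules over `k` is Noetherian: every subfunctor of a
finitely generated `C`-module is finitely generated. -/
def ModulesNoetherian : Prop :=
  ∀ M : C ⥤ ModuleCat.{u} k, IsFinitelyGenerated C k M →
    ∀ N : ∀ c : C, Submodule k (M.obj c), IsSubfunctor C k M N →
      SubfunctorFG C k M N

/-- The representable `C`-module `P_{C,x}`, with `P_{C,x}(y)` the free
`k`-module on `Hom_C(x, y)`. -/
noncomputable def RepresentableModule (x : C) : C ⥤ ModuleCat.{u} k :=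
  coyoneda.obj (Opposite.op x) ⋙ ModuleCat.free k

/-- Generators indexed by an arbitrary finite type suffice for finite generation. -/
lemma isFinitelyGenerated_of_finite {ι : Type*} [Finite ι]
    (M : C ⥤ ModuleCat.{u} k) (c : ι → C) (x : ∀ i, M.obj (c i))
    (h : ∀ N : ∀ d : C, Submodule k (M.obj d), IsSubfunctor C k M N →
      (∀ i, x i ∈ N (c i)) → ∀ d : C, N d = ⊤) :
    IsFinitelyGenerated C k M := by
  cases nonempty_fintype ι
  obtain ⟨e⟩ : Nonempty (Fin (Fintype.card ι) ≃ ι) := ⟨(Fintype.equivFin ι).symm⟩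
  refine ⟨Fintype.card ι, fun j => c (e j), fun j => x (e j), fun N hN hx => ?_⟩
  refine h N hN fun i => ?_
  obtain ⟨j, rfl⟩ : ∃ j, e j = i := ⟨e.symm i, e.apply_symm_apply i⟩
  exact hx j

/-- The pullback of a finitely generated `D`-module along a finite functor is
finitely generated. -/
lemma pullback_fg (D : Type u) [Category.{u} D] (Φ : C ⥤ D)
    (hfin : ∀ y : D, IsFinitelyGenerated C k (Φ ⋙ RepresentableModule D k y))
    (M : D ⥤ ModuleCat.{u} k) (hM : IsFinitelyGenerated D k M) :
    IsFinitelyGenerated C k (Φ ⋙ M) := by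
  obtain ⟨m, d, gen, hgen⟩ := hM
  choose n cc p hp using fun j => hfin (d j)
  refine isFinitelyGenerated_of_finite C k (ι := Σ j : Fin m, Fin (n j)) (Φ ⋙ M)
    (fun i => cc i.1 i.2)
    (fun i => Finsupp.linearCombination k
      (fun f : d i.1 ⟶ Φ.obj (cc i.1 i.2) => M.map f (gen i.1)) (p i.1 i.2)) ?_
  intro N hN hx
  -- first: the image of every single basis vector lies in `N`
  have key : ∀ (j : Fin m) (c' : C) (f : d j ⟶ Φ.obj c'), M.map f (gen j) ∈ N c' := by
    intro j c' f
    -- the preimage of N under evaluation is a subfunctor of the pulled back representable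
    have hsub : IsSubfunctor C k (Φ ⋙ RepresentableModule D k (d j))
        (fun c' => Submodule.comap
          (Finsupp.linearCombination k
            (fun f : d j ⟶ Φ.obj c' => M.map f (gen j)) :
            ((d j ⟶ Φ.obj c') →₀ k) →ₗ[k] M.obj (Φ.obj c')) (N c')) := by
      intro a b g q hq
      have hq' : Finsupp.linearCombination k
          (fun f : d j ⟶ Φ.obj a => M.map f (gen j)) q ∈ N a := hq
      have h2 : Finsupp.linearCombination k
            (fun f : d j ⟶ Φ.obj b => M.map f (gen j))
            (Finsupp.mapDomain (fun f : d j ⟶ Φ.obj a => f ≫ Φ.map g) q)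
          = (M.map (Φ.map g)).hom
            (Finsupp.linearCombination k
              (fun f : d j ⟶ Φ.obj a => M.map f (gen j)) q) := by
        erw [Finsupp.linearCombination_mapDomain, Finsupp.apply_linearCombination]
        have hv : ((fun f : d j ⟶ Φ.obj b => M.map f (gen j)) ∘
              (fun f : d j ⟶ Φ.obj a => f ≫ Φ.map g))
            = fun f : d j ⟶ Φ.obj a =>
                (M.map (Φ.map g)).hom
                  (M.map f (gen j)) := by
          funext f'
          show M.map (f' ≫ Φ.map g) (gen j) = _
          rw [M.map_comp]
          rfl
        rw [hv]
        rfl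
      have h4 : Finsupp.linearCombination k
          (fun f : d j ⟶ Φ.obj b => M.map f (gen j))
          (Finsupp.mapDomain (fun f : d j ⟶ Φ.obj a => f ≫ Φ.map g) q) ∈ N b := by
        rw [h2]
        exact hN g (Finsupp.linearCombination k
          (fun f : d j ⟶ Φ.obj a => M.map f (gen j)) q) hq'
      exact h4
    have htop := hp j _ hsub (fun i => hx ⟨j, i⟩) c'
    have hmem : (Finsupp.single f (1 : k)) ∈ Submodule.comap
        (Finsupp.linearCombination k
          (fun f : d j ⟶ Φ.obj c' => M.map f (gen j)) :
          ((d j ⟶ Φ.obj c') →₀ k) →ₗ[k] M.obj (Φ.obj c')) (N c') := by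
      exact Submodule.eq_top_iff'.mp htop (Finsupp.single f (1 : k))
    have hval : Finsupp.linearCombination k
        (fun f : d j ⟶ Φ.obj c' => M.map f (gen j)) (Finsupp.single f (1 : k))
        = M.map f (gen j) := by
      rw [Finsupp.linearCombination_single, one_smul]
    rw [Submodule.mem_comap] at hmem
    have hmem2 : Finsupp.linearCombination k
        (fun f' : d j ⟶ Φ.obj c' => M.map f' (gen j))
        (Finsupp.single f (1 : k)) ∈ N c' := hmem
    rw [Finsupp.linearCombination_single, one_smul] at hmem2
    exact hmem2
  -- the largest D-subfunctor pulling back into N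
  have hbig : ∀ z : D, (⟨⟨⟨{m | ∀ (c' : C) (f : z ⟶ Φ.obj c'), M.map f m ∈ N c'},
      fun {a b} ha hb c' f => by
        rw [map_add]; exact (N c').add_mem (ha c' f) (hb c' f)⟩,
      fun c' f => by rw [map_zero]; exact (N c').zero_mem⟩,
      fun a {m} hm c' f => by
        rw [map_smul]; exact (N c').smul_mem a (hm c' f)⟩ :
      Submodule k (M.obj z)) = ⊤ := by
    refine hgen _ ?_ ?_
    · intro z z' g m hm c' f
      have : M.map f (M.map g m) = M.map (g ≫ f) m := by
        rw [M.map_comp]; rfl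
      rw [this]
      exact hm c' (g ≫ f)
    · intro j c' f
      exact key j c' f
  intro c'
  rw [Submodule.eq_top_iff']
  intro m
  have hm := Submodule.eq_top_iff'.mp (hbig (Φ.obj c')) m c' (𝟙 _)
  rw [M.map_id] at hm
  exact hm

/-- If `Φ : C ⥤ D` is essentially surjective and finite (the pullback of every
representable `D`-module is a finitely generated `C`-module), and the category
of `C`-modules over `k` is Noetherian, then the category of `D`-modules over
`k` is Noetherian. -/
theorem noetherian_of_essSurj_finite_functor
    (D : Type u) [Category.{u} D] (Φ : C ⥤ D) (hsurj : Φ.EssSurj)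
    (hfin : ∀ y : D, IsFinitelyGenerated C k (Φ ⋙ RepresentableModule D k y))
    (hC : ModulesNoetherian C k) :
    ModulesNoetherian D k := by
  intro M hM N hN
  have hM' : IsFinitelyGenerated C k (Φ ⋙ M) := pullback_fg C k D Φ hfin M hM
  have hN' : IsSubfunctor C k (Φ ⋙ M) (fun c => N (Φ.obj c)) :=
    fun f x hx => hN (Φ.map f) x hx
  obtain ⟨n, c, x, hx, hgen⟩ := hC (Φ ⋙ M) hM' _ hN'
  refine ⟨n, fun i => Φ.obj (c i), x, hx, ?_⟩
  intro N' hN'sub hle hx'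
  have heq : ∀ c' : C, N' (Φ.obj c') = N (Φ.obj c') :=
    hgen (fun c' => N' (Φ.obj c')) (fun f x hx => hN'sub (Φ.map f) x hx)
      (fun c' => hle (Φ.obj c')) hx'
  intro z
  refine le_antisymm (hle z) ?_
  intro m hm
  set c0 := Φ.objPreimage z with hc0
  set e := Φ.objObjPreimageIso z with he
  have h1 : M.map e.inv m ∈ N (Φ.obj c0) := hN e.inv m hm
  rw [← heq c0] at h1
  have h2 : M.map e.hom (M.map e.inv m) ∈ N' z := hN'sub e.hom _ h1
  have h3 : M.map e.hom (M.map e.inv m) = m := by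
    have : M.map e.hom (M.map e.inv m) = M.map (e.inv ≫ e.hom) m := by
      rw [M.map_comp]; rfl
    rw [this, Iso.inv_hom_id, M.map_id]
    rfl
  rwa [h3] at h2
end

section
/- Let R be a finite commutative local ring. If f: R^a → R^b and g: R^b → R^c are column-adapted R-linear maps, then the composition g∘f: R^a → R^c is column-adapted. -/
/-- An `n × n'` matrix over a commutative local ring is column-adapted if there
is a strictly increasing sequence `s₁ < ⋯ < sₙ` of columns such that the
`sᵢ`-th column is the `i`-th standard basis vector and every entry `(i,j)` with
`j < sᵢ` is a non-unit. -/
def IsColumnAdapted {R : Type*} [CommRing R] {n n' : ℕ}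
    (f : Matrix (Fin n) (Fin n') R) : Prop :=
  ∃ s : Fin n → Fin n', StrictMono s ∧
    (∀ i j, f j (s i) = if j = i then (1 : R) else 0) ∧
    (∀ (i : Fin n) (j : Fin n'), (j : ℕ) < (s i : ℕ) → ¬ IsUnit (f i j))

/-- Over a finite commutative local ring, the composition of column-adapted
maps is column-adapted. -/
theorem isColumnAdapted_comp {R : Type*} [CommRing R] [Finite R] [IsLocalRing R]
    {a b c : ℕ} (f : Matrix (Fin b) (Fin a) R) (g : Matrix (Fin c) (Fin b) R)
    (hf : IsColumnAdapted f) (hg : IsColumnAdapted g) :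
    IsColumnAdapted (g * f) := by
  obtain ⟨sf, hsf, hf1, hf2⟩ := hf
  obtain ⟨sg, hsg, hg1, hg2⟩ := hg
  refine ⟨sf ∘ sg, hsf.comp hsg, ?_, ?_⟩
  · intro i j
    rw [Matrix.mul_apply]
    simp only [Function.comp_apply, hf1, mul_ite, mul_one, mul_zero,
      Finset.sum_ite_eq', Finset.mem_univ, if_true]
    exact hg1 i j
  · intro i j hj
    simp only [Function.comp_apply] at hj
    rw [Matrix.mul_apply]
    intro hu
    have : (∑ k, g i k * f k j) ∈ IsLocalRing.maximalIdeal R := by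
      refine Ideal.sum_mem _ (fun k _ => ?_)
      rcases lt_or_ge (k : ℕ) (sg i : ℕ) with h | h
      · exact Ideal.mul_mem_right _ _ (hg2 i k h)
      · refine Ideal.mul_mem_left _ _ (hf2 k j ?_)
        have : (sf (sg i) : ℕ) ≤ (sf k : ℕ) := by
          exact_mod_cast (hsf.le_iff_le).2 (by exact_mod_cast h)
        omega
    exact (IsLocalRing.mem_maximalIdeal _).1 this hu
end

section
/- Let R be a finite commutative local ring and let f: R^{n'} → R^n be a surjective R-linear map. Then f factors uniquely as f = f_2 ∘ f_1 where f_1: R^{n'} → R^n is column-adapted and f_2: R^n → R^n is an isomorphism. -/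
set_option linter.unusedSectionVars false
namespace ColumnAdaptedAux

open Matrix Function Finset

variable {R : Type*} [CommRing R] [IsLocalRing R] {n n' : ℕ}

lemma mem_max {x : R} (h : ¬ IsUnit x) : x ∈ IsLocalRing.maximalIdeal R := h

lemma not_isUnit_of_mem_max {x : R} (h : x ∈ IsLocalRing.maximalIdeal R) : ¬ IsUnit x := h

lemma mulVec_inj {M N : Matrix (Fin n) (Fin n') R} (h : ∀ v, M.mulVec v = N.mulVec v) : M = N := by
  ext i j
  have := congrFun (h (Pi.single j 1)) i
  simpa [Matrix.mulVec_single] using this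

lemma surj_of_rightInv (M : Matrix (Fin n) (Fin n') R) (C : Matrix (Fin n') (Fin n) R)
    (h : M * C = 1) : Surjective M.mulVecLin := fun y =>
  ⟨C.mulVec y, by rw [mulVecLin_apply, mulVec_mulVec, h, one_mulVec]⟩

lemma rightInv_of_surj (M : Matrix (Fin n) (Fin n') R)
    (h : Surjective M.mulVecLin) : ∃ C : Matrix (Fin n') (Fin n) R, M * C = 1 := by
  obtain ⟨σ, hσ⟩ := Module.projective_lifting_property M.mulVecLin LinearMap.id h
  refine ⟨LinearMap.toMatrix' σ, mulVec_inj fun v => ?_⟩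
  have h1 : (LinearMap.toMatrix' σ).mulVec v = σ v := by
    rw [← Matrix.mulVecLin_apply]
    exact congrFun (congrArg _ (Matrix.toLin'_toMatrix' σ)) v
  rw [one_mulVec, ← Matrix.mulVec_mulVec, h1, ← Matrix.mulVecLin_apply]
  exact LinearMap.congr_fun hσ v

/-- column computation: pivot columns of `h` are standard basis vectors. -/
lemma col_eq (A₁ A₂ : Matrix (Fin n) (Fin n') R) (h : Matrix (Fin n) (Fin n) R)
    (s t : Fin n → Fin n')
    (hp1 : ∀ i j, A₁ j (s i) = if j = i then (1 : R) else 0)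
    (hp2 : ∀ i j, A₂ j (t i) = if j = i then (1 : R) else 0)
    (he : A₂ = h * A₁) (k : Fin n) (hk : s k = t k) (j : Fin n) :
    h j k = if j = k then (1 : R) else 0 := by
  have e := hp2 k j
  rw [he, Matrix.mul_apply, ← hk] at e
  simp only [hp1 k, mul_ite, mul_one, mul_zero, Finset.sum_ite_eq', Finset.mem_univ,
    if_true] at e
  exact e

lemma not_pivot_lt (A₁ A₂ : Matrix (Fin n) (Fin n') R) (h : Matrix (Fin n) (Fin n) R)
    (s t : Fin n → Fin n') (hs : StrictMono s)
    (hp1 : ∀ i j, A₁ j (s i) = if j = i then (1 : R) else 0)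
    (hn1 : ∀ (i : Fin n) (j : Fin n'), (j : ℕ) < (s i : ℕ) → ¬ IsUnit (A₁ i j))
    (hp2 : ∀ i j, A₂ j (t i) = if j = i then (1 : R) else 0)
    (he : A₂ = h * A₁) (i : Fin n)
    (hcols : ∀ k, k < i → ∀ j, h j k = if j = k then (1 : R) else 0) :
    ¬ (t i < s i) := by
  intro hlt
  have e : A₂ i (t i) = 1 := by rw [hp2 i i, if_pos rfl]
  rw [he, Matrix.mul_apply] at e
  have hmem : ∑ r, h i r * A₁ r (t i) ∈ IsLocalRing.maximalIdeal R := by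
    refine Ideal.sum_mem _ fun r _ => ?_
    rcases lt_or_ge r i with hr | hr
    · rw [hcols r hr i, if_neg (by exact fun hc => absurd hc (by rintro rfl; exact lt_irrefl _ hr)),
        zero_mul]
      exact Ideal.zero_mem _
    · refine Ideal.mul_mem_left _ _ (mem_max (hn1 r (t i) ?_))
      exact lt_of_lt_of_le hlt (hs.monotone hr)
  rw [e] at hmem
  exact not_isUnit_of_mem_max hmem isUnit_one

/-- Uniqueness: if two column-adapted matrices differ by an invertible matrix, they are equal
and the matrix is the identity. -/
lemma adapted_unique (A₁ A₂ : Matrix (Fin n) (Fin n') R) (h h' : Matrix (Fin n) (Fin n) R)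
    (hh : h' * h = 1) (hh' : h * h' = 1)
    (c₁ : IsColumnAdapted A₁) (c₂ : IsColumnAdapted A₂) (he : A₂ = h * A₁) :
    h = 1 ∧ A₂ = A₁ := by
  obtain ⟨s, hs, hp1, hn1⟩ := c₁
  obtain ⟨t, ht, hp2, hn2⟩ := c₂
  have he' : A₁ = h' * A₂ := by rw [he, ← Matrix.mul_assoc, hh, Matrix.one_mul]
  have step : ∀ i : Fin n, (∀ k, k < i → s k = t k) → s i = t i := by
    intro i ih
    refine le_antisymm (not_lt.mp ?_) (not_lt.mp ?_)
    · exact not_pivot_lt A₁ A₂ h s t hs hp1 hn1 hp2 he i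
        (fun k hk j => col_eq A₁ A₂ h s t hp1 hp2 he k (ih k hk) j)
    · exact not_pivot_lt A₂ A₁ h' t s ht hp2 hn2 hp1 he' i
        (fun k hk j => col_eq A₂ A₁ h' t s hp2 hp1 he' k (ih k hk).symm j)
  have key : ∀ N : ℕ, ∀ i : Fin n, (i : ℕ) < N → s i = t i := by
    intro N
    induction N with
    | zero => exact fun i hi => absurd hi (Nat.not_lt_zero _)
    | succ N IH =>
      intro i hi
      exact step i fun k hk => IH k (by omega)
  have hst : ∀ i, s i = t i := fun i => key ((i : ℕ) + 1) i (Nat.lt_succ_self _)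
  have h1 : h = 1 := by
    ext j k
    rw [col_eq A₁ A₂ h s t hp1 hp2 he k (hst k) j, Matrix.one_apply]
  exact ⟨h1, by rw [he, h1, Matrix.one_mul]⟩



lemma det_one_sub_mem (D : Matrix (Fin n) (Fin n) R)
    (hD : ∀ i j, D i j ∈ IsLocalRing.maximalIdeal R) : IsUnit (1 - D).det := by
  by_contra hdet
  have h0 : IsLocalRing.residue R (1 - D).det = 0 :=
    (IsLocalRing.residue_eq_zero_iff _).mpr (mem_max hdet)
  have h1 : ((1 - D).map (IsLocalRing.residue R)) = 1 := by
    ext i j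
    simp only [Matrix.map_apply, Matrix.sub_apply, map_sub]
    rw [(IsLocalRing.residue_eq_zero_iff _).mpr (hD i j)]
    rcases eq_or_ne i j with rfl | hij
    · simp [Matrix.one_apply]
    · simp [Matrix.one_apply, hij]
  have h2 := RingHom.map_det (IsLocalRing.residue R) (1 - D)
  rw [h0, RingHom.mapMatrix_apply, h1, Matrix.det_one] at h2
  exact zero_ne_one h2

lemma extend {m : ℕ} (B : Matrix (Fin (m+1)) (Fin (n'+1)) R)
    (hB0 : ∀ i, B i 0 = if i = 0 then (1:R) else 0)
    (g' : Matrix (Fin m) (Fin m) R) (A' : Matrix (Fin m) (Fin n') R)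
    (hadapt : IsColumnAdapted A') (hg' : IsUnit g'.det)
    (hBA : (fun i j => B i.succ j.succ) = g' * A') :
    ∃ (A : Matrix (Fin (m+1)) (Fin (n'+1)) R) (G : Matrix (Fin (m+1)) (Fin (m+1)) R),
      IsColumnAdapted A ∧ IsUnit G.det ∧ B = G * A := by
  obtain ⟨s', hs', hp', hn'⟩ := hadapt
  set r : Fin n' → R := fun j => B 0 j.succ with hr
  set A : Matrix (Fin (m+1)) (Fin (n'+1)) R := fun i j =>
    Fin.cases (Fin.cases 1 (fun j' => r j' - ∑ k, r (s' k) * A' k j') j)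
      (fun i' => Fin.cases 0 (fun j' => A' i' j') j) i with hA
  set G : Matrix (Fin (m+1)) (Fin (m+1)) R := fun i k =>
    Fin.cases (Fin.cases 1 (fun k' => r (s' k')) k)
      (fun i' => Fin.cases 0 (fun k' => g' i' k') k) i with hG
  have hGsub : G.submatrix Fin.succ Fin.succ = g' := by
    ext i k
    rw [Matrix.submatrix_apply]
    simp [hG]
  have hdetG : G.det = g'.det := by
    rw [Matrix.det_succ_column_zero, Fin.sum_univ_succ]
    have h0 : ∀ i : Fin m, G i.succ 0 = 0 := fun i => by simp [hG]
    simp [h0, hGsub, hG]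
    exact congrArg Matrix.det hGsub
  refine ⟨A, G, ⟨fun i => Fin.cases 0 (fun i' => (s' i').succ) i, ?_, ?_, ?_⟩,
    hdetG ▸ hg', ?_⟩
  · -- StrictMono
    intro a b hab
    rcases Fin.eq_zero_or_eq_succ a with rfl | ⟨a', rfl⟩ <;>
      rcases Fin.eq_zero_or_eq_succ b with rfl | ⟨b', rfl⟩
    · exact absurd hab (lt_irrefl _)
    · simpa using Fin.succ_pos _
    · exact absurd hab (by simp [Fin.lt_def])
    · simp only [Fin.cases_succ]
      rw [Fin.succ_lt_succ_iff] at hab ⊢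
      exact hs' hab
  · -- pivot columns
    intro i j
    rcases Fin.eq_zero_or_eq_succ i with rfl | ⟨i', rfl⟩
    · rcases Fin.eq_zero_or_eq_succ j with rfl | ⟨j', rfl⟩
      · simp [hA]
      · simp [hA, Fin.succ_ne_zero]
    · rcases Fin.eq_zero_or_eq_succ j with rfl | ⟨j', rfl⟩
      · have : ∑ k, r (s' k) * A' k (s' i') = r (s' i') := by
          have : ∀ k, A' k (s' i') = if k = i' then (1:R) else 0 := fun k => hp' i' k
          simp [this, mul_ite, Finset.sum_ite_eq', Finset.mem_univ]
        simp [hA, this, (Fin.succ_ne_zero i').symm]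
      · have : A' j' (s' i') = if j' = i' then (1:R) else 0 := hp' i' j'
        simp [hA, this, Fin.succ_inj]
  · -- nonunits
    intro i j hj
    rcases Fin.eq_zero_or_eq_succ i with rfl | ⟨i', rfl⟩
    · simp at hj
    · rcases Fin.eq_zero_or_eq_succ j with rfl | ⟨j', rfl⟩
      · simpa [hA] using not_isUnit_zero
      · simp only [hA, Fin.cases_succ]
        refine hn' i' j' ?_
        simp only [Fin.cases_succ, Fin.val_succ] at hj
        omega
  · -- B = G * A
    ext i j
    rw [Matrix.mul_apply, Fin.sum_univ_succ]
    rcases Fin.eq_zero_or_eq_succ i with rfl | ⟨i', rfl⟩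
    · rcases Fin.eq_zero_or_eq_succ j with rfl | ⟨j', rfl⟩
      · simp [hA, hG, hB0]
      · simp only [hA, hG, Fin.cases_zero, Fin.cases_succ, one_mul]
        rw [sub_add_cancel]
    · rcases Fin.eq_zero_or_eq_succ j with rfl | ⟨j', rfl⟩
      · simp [hA, hG, hB0, Fin.succ_ne_zero]
      · simp only [hA, hG, Fin.cases_succ, Fin.cases_zero, zero_mul, zero_add]
        have := congrFun (congrFun hBA i') j'
        simp only [Matrix.mul_apply] at this
        rw [← this]

lemma caseB0 {m : ℕ}
    (IH : ∀ M : Matrix (Fin m) (Fin n') R, Surjective M.mulVecLin →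
      ∃ (A : Matrix (Fin m) (Fin n') R) (g : Matrix (Fin m) (Fin m) R),
        IsColumnAdapted A ∧ IsUnit g.det ∧ M = g * A)
    (f : Matrix (Fin (m+1)) (Fin (n'+1)) R) (hf : Surjective f.mulVecLin)
    (h00 : IsUnit (f 0 0)) :
    ∃ (A : Matrix (Fin (m+1)) (Fin (n'+1)) R) (g : Matrix (Fin (m+1)) (Fin (m+1)) R),
      IsColumnAdapted A ∧ IsUnit g.det ∧ f = g * A := by
  obtain ⟨u, hu⟩ := h00
  set v : Fin (m+1) → R := fun i => f i 0 with hv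
  set E : Matrix (Fin (m+1)) (Fin (m+1)) R :=
    fun i k => if k = 0 then v i else if i = k then 1 else 0 with hE
  set F : Matrix (Fin (m+1)) (Fin (m+1)) R :=
    fun i k => if k = 0 then (if i = 0 then ((u⁻¹ : Rˣ) : R) else -((u⁻¹ : Rˣ) : R) * v i)
      else if i = k then 1 else 0 with hF
  have hv0 : v 0 = (u : R) := hu.symm
  have hfv : ∀ j, f j 0 = v j := fun j => rfl
  have hEi0 : ∀ i, E i 0 = v i := fun i => by simp [hE]
  have hE0succ : ∀ j : Fin m, E 0 j.succ = 0 := fun j => by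
    simp only [hE]
    rw [if_neg (Fin.succ_ne_zero j), if_neg (Ne.symm (Fin.succ_ne_zero j))]
  have hEsuccsucc : ∀ (i j : Fin m), E i.succ j.succ = if i = j then (1:R) else 0 :=
    fun i j => by
      simp only [hE]
      rw [if_neg (Fin.succ_ne_zero j)]
      simp [Fin.succ_inj]
  have hF00 : F 0 0 = ((u⁻¹ : Rˣ) : R) := by simp [hF]
  have hFsucc0 : ∀ i : Fin m, F i.succ 0 = -((u⁻¹ : Rˣ) : R) * v i.succ := fun i => by
    simp [hF, Fin.succ_ne_zero]
  have hF0succ : ∀ j : Fin m, F 0 j.succ = 0 := fun j => by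
    simp only [hF]
    rw [if_neg (Fin.succ_ne_zero j), if_neg (Ne.symm (Fin.succ_ne_zero j))]
  have hFsuccsucc : ∀ (i j : Fin m), F i.succ j.succ = if i = j then (1:R) else 0 :=
    fun i j => by
      simp only [hF]
      rw [if_neg (Fin.succ_ne_zero j)]
      simp [Fin.succ_inj]
  have hEF : E * F = 1 := by
    ext i k
    rw [Matrix.mul_apply, Fin.sum_univ_succ]
    rcases Fin.eq_zero_or_eq_succ i with rfl | ⟨i', rfl⟩ <;>
      rcases Fin.eq_zero_or_eq_succ k with rfl | ⟨k', rfl⟩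
    · rw [Finset.sum_congr rfl fun j _ => by rw [hE0succ j, zero_mul]]
      rw [Finset.sum_const_zero, add_zero, hEi0, hF00, hv0, Matrix.one_apply_eq]
      exact u.mul_inv
    · rw [Finset.sum_congr rfl fun j _ => by rw [hE0succ j, zero_mul]]
      rw [Finset.sum_const_zero, add_zero, hF0succ, mul_zero,
        Matrix.one_apply_ne (Ne.symm (Fin.succ_ne_zero k'))]
    · rw [Finset.sum_congr rfl fun j _ => by
        rw [hEsuccsucc i' j, hFsucc0 j, ite_mul, one_mul, zero_mul]]
      rw [Finset.sum_ite_eq, if_pos (Finset.mem_univ _), hEi0, hF00,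
        Matrix.one_apply_ne (Fin.succ_ne_zero i')]
      ring
    · rw [Finset.sum_congr rfl fun j _ => by
        rw [hEsuccsucc i' j, hFsuccsucc j k', ite_mul, one_mul, zero_mul]]
      rw [Finset.sum_ite_eq, if_pos (Finset.mem_univ _), hF0succ, mul_zero, zero_add,
        Matrix.one_apply]
      simp [Fin.succ_inj]
  have hFE : F * E = 1 := mul_eq_one_comm.mp hEF
  set B : Matrix (Fin (m+1)) (Fin (n'+1)) R := F * f with hB
  have hEB : f = E * B := by rw [hB, ← Matrix.mul_assoc, hEF, Matrix.one_mul]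
  have hB0 : ∀ i, B i 0 = if i = 0 then (1:R) else 0 := by
    intro i
    rw [hB, Matrix.mul_apply, Fin.sum_univ_succ]
    rcases Fin.eq_zero_or_eq_succ i with rfl | ⟨i', rfl⟩
    · rw [Finset.sum_congr rfl fun j _ => by rw [hF0succ j, zero_mul]]
      rw [Finset.sum_const_zero, add_zero, hF00, if_pos rfl, ← hu]
      exact u.inv_mul
    · rw [Finset.sum_congr rfl fun j _ => by
        rw [hFsuccsucc i' j, ite_mul, one_mul, zero_mul]]
      rw [Finset.sum_ite_eq, if_pos (Finset.mem_univ _), hFsucc0, ← hu,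
        if_neg (Fin.succ_ne_zero i'), hfv]
      have huu : ((u⁻¹ : Rˣ) : R) * (u : R) = 1 := u.inv_mul
      linear_combination (-(v i'.succ)) * huu
  set B' : Matrix (Fin m) (Fin n') R := fun i j => B i.succ j.succ with hB'
  have hB'surj : Surjective B'.mulVecLin := by
    intro y
    obtain ⟨x, hx⟩ := hf (E.mulVec (Fin.cons 0 y))
    rw [Matrix.mulVecLin_apply] at hx
    have hBx : B.mulVec x = Fin.cons 0 y := by
      rw [hB, ← Matrix.mulVec_mulVec, hx, Matrix.mulVec_mulVec, hFE, Matrix.one_mulVec]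
    refine ⟨fun j => x j.succ, ?_⟩
    funext i
    have h2 := congrFun hBx i.succ
    rw [Matrix.mulVec, dotProduct, Fin.sum_univ_succ, hB0, if_neg (Fin.succ_ne_zero i),
      zero_mul, zero_add, Fin.cons_succ] at h2
    rw [Matrix.mulVecLin_apply, Matrix.mulVec, dotProduct]
    exact h2
  obtain ⟨A', g', hadapt, hg', hBA⟩ := IH B' hB'surj
  obtain ⟨A, G, hA, hG, hBGA⟩ := extend B hB0 g' A' hadapt hg' hBA
  have hdetE : IsUnit E.det :=
    IsUnit.of_mul_eq_one F.det (by rw [← Matrix.det_mul, hEF, Matrix.det_one])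
  exact ⟨A, E * G, hA, by rw [Matrix.det_mul]; exact hdetE.mul hG,
    by rw [hEB, hBGA, Matrix.mul_assoc]⟩

lemma caseB {m : ℕ}
    (IH : ∀ M : Matrix (Fin m) (Fin n') R, Surjective M.mulVecLin →
      ∃ (A : Matrix (Fin m) (Fin n') R) (g : Matrix (Fin m) (Fin m) R),
        IsColumnAdapted A ∧ IsUnit g.det ∧ M = g * A)
    (f : Matrix (Fin (m+1)) (Fin (n'+1)) R) (hf : Surjective f.mulVecLin)
    (i₀ : Fin (m+1)) (hi₀ : IsUnit (f i₀ 0)) :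
    ∃ (A : Matrix (Fin (m+1)) (Fin (n'+1)) R) (g : Matrix (Fin (m+1)) (Fin (m+1)) R),
      IsColumnAdapted A ∧ IsUnit g.det ∧ f = g * A := by
  set σ : Equiv.Perm (Fin (m+1)) := Equiv.swap 0 i₀ with hσ
  set f₁ : Matrix (Fin (m+1)) (Fin (n'+1)) R := fun i j => f (σ i) j with hf₁
  have hf₁surj : Surjective f₁.mulVecLin := by
    intro y
    obtain ⟨x, hx⟩ := hf (fun i => y (σ.symm i))
    refine ⟨x, ?_⟩
    funext i
    have := congrFun hx (σ i)
    rw [Matrix.mulVecLin_apply, Matrix.mulVec, dotProduct] at this ⊢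
    simpa [hf₁] using this.trans (congrArg y (σ.symm_apply_apply i))
  have h00 : IsUnit (f₁ 0 0) := by
    simpa [hf₁, hσ, Equiv.swap_apply_left] using hi₀
  obtain ⟨A, g, hA, hg, hfact⟩ := caseB0 IH f₁ hf₁surj h00
  refine ⟨A, fun i k => g (σ i) k, hA, ?_, ?_⟩
  · have h1 : (fun i k => g (σ i) k) = g.submatrix σ id := rfl
    rw [h1, Matrix.det_permute]
    refine IsUnit.mul ?_ hg
    rcases Int.units_eq_one_or (Equiv.Perm.sign σ) with h1 | h1 <;>
      simp [h1, IsUnit.neg, isUnit_one]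
  · ext i j
    have h2 : f i j = f₁ (σ i) j := by simp [hf₁, hσ, Equiv.swap_apply_self]
    erw [h2, hfact, Matrix.mul_apply]

lemma exists_factor :
    ∀ (n' : ℕ) {n : ℕ} (f : Matrix (Fin n) (Fin n') R), Surjective f.mulVecLin →
      ∃ (A : Matrix (Fin n) (Fin n') R) (g : Matrix (Fin n) (Fin n) R),
        IsColumnAdapted A ∧ IsUnit g.det ∧ f = g * A := by
  intro n'
  induction n' with
  | zero =>
    intro n f hf
    match n, f, hf with
    | 0, f, hf =>
      exact ⟨f, 1, ⟨Fin.elim0, fun a => a.elim0, fun i => i.elim0, fun i => i.elim0⟩,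
        by simp, (Matrix.one_mul f).symm⟩
    | n + 1, f, hf =>
      exfalso
      obtain ⟨x, hx⟩ := hf 1
      have h0 := congrFun hx 0
      rw [Matrix.mulVecLin_apply, Matrix.mulVec, dotProduct] at h0
      simp only [Finset.univ_eq_empty, Finset.sum_empty, Pi.one_apply] at h0
      exact zero_ne_one h0
  | succ n' IH =>
    intro n f hf
    by_cases hcol : ∀ i, ¬ IsUnit (f i 0)
    · -- all entries of the first column are non-units
      obtain ⟨C, hC⟩ := rightInv_of_surj f hf
      set f' : Matrix (Fin n) (Fin n') R := fun i j => f i j.succ with hf'def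
      set C' : Matrix (Fin n') (Fin n) R := fun j k => C j.succ k with hC'def
      set D : Matrix (Fin n) (Fin n) R := fun i k => f i 0 * C 0 k with hDdef
      have hD : ∀ i k, D i k ∈ IsLocalRing.maximalIdeal R := fun i k =>
        Ideal.mul_mem_right _ _ (mem_max (hcol i))
      have hprod : f' * C' = 1 - D := by
        ext i k
        have h2 : (f * C) i k = (1 : Matrix (Fin n) (Fin n) R) i k := by rw [hC]
        rw [Matrix.mul_apply, Fin.sum_univ_succ] at h2
        rw [Matrix.mul_apply, Matrix.sub_apply]
        exact eq_sub_of_add_eq' h2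
      have hdet : IsUnit (1 - D).det := det_one_sub_mem D hD
      have hf' : Surjective f'.mulVecLin := by
        apply surj_of_rightInv f' (C' * (1 - D)⁻¹)
        rw [← Matrix.mul_assoc, hprod, Matrix.mul_nonsing_inv _ hdet]
      obtain ⟨A', g, ⟨s', hs', hp', hn'⟩, hg, hfact⟩ := IH f' hf'
      refine ⟨fun i j => Fin.cases ((g⁻¹ * f) i 0) (fun j' => A' i j') j, g,
        ⟨fun i => (s' i).succ, ?_, ?_, ?_⟩, hg, ?_⟩
      · intro a b hab
        rw [Fin.succ_lt_succ_iff]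
        exact hs' hab
      · intro i j
        simpa using hp' i j
      · intro i j hj
        rcases Fin.eq_zero_or_eq_succ j with rfl | ⟨j', rfl⟩
        · simp only [Fin.cases_zero]
          apply not_isUnit_of_mem_max
          rw [Matrix.mul_apply]
          exact Ideal.sum_mem _ fun r _ => Ideal.mul_mem_left _ _ (mem_max (hcol r))
        · simp only [Fin.cases_succ]
          refine hn' i j' ?_
          simp only [Fin.val_succ] at hj
          omega
      · ext i j
        rcases Fin.eq_zero_or_eq_succ j with rfl | ⟨j', rfl⟩
        · erw [Matrix.mul_apply]
          simp only [Fin.cases_zero]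
          rw [← Matrix.mul_apply, ← Matrix.mul_assoc, Matrix.mul_nonsing_inv _ hg,
            Matrix.one_mul]
        · erw [Matrix.mul_apply]
          simp only [Fin.cases_succ]
          rw [← Matrix.mul_apply, ← hfact]
    · push_neg at hcol
      obtain ⟨i₀, hi₀⟩ := hcol
      have hn0 : n ≠ 0 := fun h => (h ▸ i₀).elim0
      obtain ⟨m, rfl⟩ : ∃ m, n = m + 1 := ⟨n - 1, by omega⟩
      exact caseB (fun M hM => IH M hM) f hf i₀ hi₀

end ColumnAdaptedAux

/-- Over a finite commutative local ring, a surjective linear map `R^{n'} → R^n`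
factors uniquely as an isomorphism composed with a column-adapted map. -/
theorem surjective_factor_columnAdapted {R : Type*} [CommRing R] [Finite R]
    [IsLocalRing R] {n n' : ℕ} (f : Matrix (Fin n) (Fin n') R)
    (hf : Function.Surjective f.mulVecLin) :
    ∃! p : Matrix (Fin n) (Fin n') R × Matrix (Fin n) (Fin n) R,
      IsColumnAdapted p.1 ∧ IsUnit p.2.det ∧ f = p.2 * p.1 := by

  obtain ⟨A, g, hA, hg, hfg⟩ := ColumnAdaptedAux.exists_factor n' f hf
  refine ⟨(A, g), ⟨hA, hg, hfg⟩, ?_⟩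
  rintro ⟨A₂, g₂⟩ ⟨hA₂, hg₂, hfg₂⟩
  have he : A₂ = (g₂⁻¹ * g) * A := by
    rw [Matrix.mul_assoc, ← hfg, hfg₂, Matrix.nonsing_inv_mul_cancel_left _ _ hg₂]
  have hinv1 : (g⁻¹ * g₂) * (g₂⁻¹ * g) = 1 := by
    rw [Matrix.mul_assoc, ← Matrix.mul_assoc g₂, Matrix.mul_nonsing_inv _ hg₂,
      Matrix.one_mul, Matrix.nonsing_inv_mul _ hg]
  have hinv2 : (g₂⁻¹ * g) * (g⁻¹ * g₂) = 1 := by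
    rw [Matrix.mul_assoc, ← Matrix.mul_assoc g, Matrix.mul_nonsing_inv _ hg,
      Matrix.one_mul, Matrix.nonsing_inv_mul _ hg₂]
  obtain ⟨h1, h2⟩ := ColumnAdaptedAux.adapted_unique A A₂ (g₂⁻¹ * g) (g⁻¹ * g₂)
    hinv1 hinv2 hA hA₂ he
  have hgg : g₂ = g := by
    have := congrArg (fun M => g₂ * M) h1
    simpa [← Matrix.mul_assoc, Matrix.mul_nonsing_inv_cancel_left _ _ hg₂] using this.symm
  exact Prod.ext h2 hgg
end

section
/- Let k be a nonzero ring and Γ a group containing a subgroup that is not finitely generated. Then the group ring k[Γ] is not left Noetherian. -/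
open MonoidAlgebra Finsupp

section Aux

variable {k : Type*} [Ring k] {Γ : Type*} [Group Γ] (K : Subgroup Γ)

/-- The `k`-linear map `k[Γ] → k[Γ/K]` induced by the quotient map. -/
noncomputable def quotMap : MonoidAlgebra k Γ →ₗ[k] ((Γ ⧸ K) →₀ k) :=
  Finsupp.lmapDomain k k (QuotientGroup.mk : Γ → Γ ⧸ K) ∘ₗ
    (MonoidAlgebra.coeffLinearEquiv k).toLinearMap

lemma quotMap_single (g : Γ) (c : k) :
    quotMap K (MonoidAlgebra.single g c) = Finsupp.single (QuotientGroup.mk g) c := by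
  exact (Finsupp.mapDomain_single :
    Finsupp.mapDomain (QuotientGroup.mk : Γ → Γ ⧸ K) (Finsupp.single g c) = _)

lemma quotMap_single_mul (γ : Γ) (c : k) (x : MonoidAlgebra k Γ) :
    quotMap K (MonoidAlgebra.single γ c * x)
      = Finsupp.mapDomain (fun q : Γ ⧸ K => γ • q) (c • quotMap K x) := by
  induction x using MonoidAlgebra.induction_linear with
  | zero => simp
  | add a b ha hb =>
      rw [mul_add, map_add, map_add, smul_add, Finsupp.mapDomain_add, ha, hb]
  | single a b =>
      rw [MonoidAlgebra.single_mul_single, quotMap_single, quotMap_single,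
        Finsupp.smul_single, Finsupp.mapDomain_single]
      rfl

lemma quotMap_mul_eq_zero (r x : MonoidAlgebra k Γ) (hx : quotMap K x = 0) :
    quotMap K (r * x) = 0 := by
  induction r using MonoidAlgebra.induction_linear with
  | zero => simp
  | add a b ha hb => rw [add_mul, map_add, ha, hb, add_zero]
  | single a b => rw [quotMap_single_mul, hx, smul_zero, Finsupp.mapDomain_zero]

lemma quotMap_span_eq_zero {T : Set Γ} (hT : T ⊆ K) (x : MonoidAlgebra k Γ)
    (hx : x ∈ Submodule.span (MonoidAlgebra k Γ)
      ((fun g => MonoidAlgebra.single g (1 : k) - 1) '' T)) :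
    quotMap K x = 0 := by
  induction hx using Submodule.span_induction with
  | mem y hy =>
      obtain ⟨g, hg, rfl⟩ := hy
      rw [map_sub, quotMap_single, MonoidAlgebra.one_def, quotMap_single]
      have : (QuotientGroup.mk g : Γ ⧸ K) = QuotientGroup.mk 1 :=
        (QuotientGroup.eq ).mpr (by simpa using K.inv_mem (hT hg))
      rw [this, sub_self]
  | zero => simp
  | add a b _ _ ha hb => rw [map_add, ha, hb, add_zero]
  | smul r y _ hy => exact quotMap_mul_eq_zero K r y hy

end Aux

/-- If `Γ` contains a subgroup which is not finitely generated, then for any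
nonzero ring `k` the group ring `k[Γ]` is not (left) Noetherian. -/
theorem monoidAlgebra_not_noetherian {k : Type*} [Ring k] [Nontrivial k]
    {Γ : Type*} [Group Γ] (H : Subgroup Γ) (hH : ¬ H.FG) :
    ¬ IsNoetherianRing (MonoidAlgebra k Γ) := by
  intro hNoeth
  classical
  set f : Γ → MonoidAlgebra k Γ := fun g => MonoidAlgebra.single g (1 : k) - 1 with hf
  set I : Submodule (MonoidAlgebra k Γ) (MonoidAlgebra k Γ) :=
    Submodule.span (MonoidAlgebra k Γ) (f '' H) with hI
  obtain ⟨S, hS⟩ := IsNoetherian.noetherian I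
  -- every generator lies in the span of finitely many `f g`, `g ∈ H`
  have hc : ∀ s ∈ (S : Set (MonoidAlgebra k Γ)), ∃ T : Finset Γ, ↑T ⊆ (H : Set Γ) ∧
      s ∈ Submodule.span (MonoidAlgebra k Γ) (f '' ↑T) := by
    intro s hs
    have hsI : s ∈ I := by rw [← hS]; exact Submodule.subset_span hs
    rw [hI] at hsI
    obtain ⟨A, hA, hsA⟩ := Submodule.mem_span_finite_of_mem_span hsI
    -- pull `A` back to a finite subset of `Γ`
    have hAex : ∀ a ∈ A, ∃ g, g ∈ H ∧ f g = a := fun a ha => hA (Finset.mem_coe.mpr ha)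
    choose g hg hfg using hAex
    refine ⟨A.attach.image (fun a => g a.1 a.2), ?_, ?_⟩
    · intro x hx
      rw [Finset.mem_coe, Finset.mem_image] at hx
      obtain ⟨a, _, rfl⟩ := hx
      exact hg _ _
    · refine Submodule.span_mono ?_ hsA
      intro a ha
      have ha' : a ∈ A := Finset.mem_coe.mp ha
      refine ⟨g a ha', ?_, hfg a ha'⟩
      rw [Finset.mem_coe, Finset.mem_image]
      exact ⟨⟨a, ha'⟩, Finset.mem_attach _ _, rfl⟩
  choose! T hT1 hT2 using hc
  set Tall : Finset Γ := S.biUnion T with hTall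
  have hTallH : (↑Tall : Set Γ) ⊆ (H : Set Γ) := by
    intro x hx
    simp only [hTall, Finset.coe_biUnion, Set.mem_iUnion] at hx
    obtain ⟨s, hs, hx⟩ := hx
    exact hT1 s (by simpa using hs) hx
  set K : Subgroup Γ := Subgroup.closure ↑Tall with hK
  have hIle : I ≤ Submodule.span (MonoidAlgebra k Γ) (f '' ↑Tall) := by
    rw [← hS, Submodule.span_le]
    intro s hs
    exact Submodule.span_mono (Set.image_mono (f := f) (by
      intro x hx
      simp only [hTall, Finset.coe_biUnion, Set.mem_iUnion]
      exact ⟨s, by simpa using hs, hx⟩)) (hT2 s hs)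
  -- H ≤ K
  have hHK : H ≤ K := by
    intro g hg
    have hfg : f g ∈ I := Submodule.subset_span ⟨g, hg, rfl⟩
    have h0 : quotMap K (f g) = 0 := by
      refine quotMap_span_eq_zero K (T := ↑Tall) Subgroup.subset_closure (f g) ?_
      exact hIle hfg
    by_contra hgK
    rw [hf] at h0
    simp only [map_sub, quotMap_single, MonoidAlgebra.one_def, quotMap_single,
      sub_eq_zero] at h0
    have : (QuotientGroup.mk g : Γ ⧸ K) = QuotientGroup.mk 1 := by
      by_contra hne
      have := Finsupp.single_eq_single_iff _ _ _ _ |>.mp h0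
      rcases this with ⟨h, _⟩ | ⟨h, _⟩
      · exact hne h
      · exact one_ne_zero h
    have hmem : g⁻¹ * 1 ∈ K := (QuotientGroup.eq).mp this
    exact hgK (by simpa using K.inv_mem hmem)
  exact hH ⟨Tall, le_antisymm (Subgroup.closure_le H |>.mpr hTallH) hHK⟩
end

section
/- Let (A,⊛) be a complemented category with generator X. Then for all objects V, V' of A, the group Aut_A(V') acts transitively on the set Hom_A(V, V'). -/
open CategoryTheory CategoryTheory.Limits CategoryTheory.MonoidalCategory

universe u v

variable {A : Type u} [Category.{v} A] [MonoidalCategory A]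

/-- The canonical morphism `V ⟶ V ⊗ V'` coming from the fact that the monoidal
unit is initial. -/
def canL (hI : IsInitial (𝟙_ A)) (V V' : A) : V ⟶ V ⊗ V' :=
  (ρ_ V).inv ≫ (V ◁ hI.to V')

/-- The canonical morphism `V' ⟶ V ⊗ V'` coming from the fact that the monoidal
unit is initial. -/
def canR (hI : IsInitial (𝟙_ A)) (V V' : A) : V' ⟶ V ⊗ V' :=
  (λ_ V').inv ≫ (hI.to V ▷ V')

/-- `d : D ⟶ V` is a complement of the subobject `c : C ⟶ V`. -/
def IsComplement (hI : IsInitial (𝟙_ A)) {C V D : A} (c : C ⟶ V) (d : D ⟶ V) : Prop :=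
  ∃ φ : C ⊗ D ≅ V, canL hI C D ≫ φ.hom = c ∧ canR hI C D ≫ φ.hom = d

/-- A complemented category: a symmetric monoidal category in which every
morphism is a monomorphism, the monoidal unit is initial, morphisms out of a
tensor product are determined by their precompositions with the two canonical
morphisms, and every subobject has a complement, unique up to isomorphism. -/
structure ComplementedCategory (A : Type u) [Category.{v} A] [MonoidalCategory A]
    [SymmetricCategory A] : Prop where
  mono : ∀ {V W : A} (f : V ⟶ W), Mono f
  unitInitial : Nonempty (IsInitial (𝟙_ A))
  hom_ext : ∀ (hI : IsInitial (𝟙_ A)) {V V' W : A} (f g : V ⊗ V' ⟶ W),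
    canL hI V V' ≫ f = canL hI V V' ≫ g → canR hI V V' ≫ f = canR hI V V' ≫ g → f = g
  compl_exists : ∀ (hI : IsInitial (𝟙_ A)) {C V : A} (c : C ⟶ V),
    ∃ (D : A) (d : D ⟶ V), IsComplement hI c d
  compl_unique : ∀ (hI : IsInitial (𝟙_ A)) {C V D D' : A} (c : C ⟶ V)
    (d : D ⟶ V) (d' : D' ⟶ V), IsComplement hI c d → IsComplement hI c d' →
    ∃ ψ : D ≅ D', ψ.hom ≫ d' = d

/-- Iterated tensor powers of an object. -/
def tpow (X : A) : ℕ → A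
  | 0 => 𝟙_ A
  | n + 1 => tpow X n ⊗ X

/-- `X` is a generator: every object is isomorphic to a unique tensor power of
`X` (whose exponent is called the `X`-rank of the object). -/
def IsGen (X : A) : Prop :=
  ∀ V : A, ∃! i : ℕ, Nonempty (V ≅ tpow X i)

/-- Tensor powers add: `X^i ⊗ X^j ≅ X^(i+j)`. -/
def tpowAdd (X : A) : ∀ i j : ℕ, tpow X i ⊗ tpow X j ≅ tpow X (i + j)
  | _, 0 => ρ_ _
  | i, j + 1 => (α_ _ _ _).symm ≪≫ whiskerRightIso (tpowAdd X i j) X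

/-- In a complemented category with generator `X`, the automorphism group of
`V'` acts transitively on `Hom(V, V')`. -/
theorem aut_transitive_on_hom [SymmetricCategory A]
    (hA : ComplementedCategory A) (X : A) (hX : IsGen X)
    (V V' : A) (f g : V ⟶ V') :
    ∃ η : Aut V', f ≫ η.hom = g := by
  obtain ⟨hI⟩ := hA.unitInitial
  obtain ⟨D, d, φ, hφL, hφR⟩ := hA.compl_exists hI f
  obtain ⟨D', d', φ', hL', hR'⟩ := hA.compl_exists hI g
  obtain ⟨i, ⟨eV⟩, -⟩ := hX V
  obtain ⟨j, ⟨eD⟩, -⟩ := hX D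
  obtain ⟨k, ⟨eD'⟩, -⟩ := hX D'
  obtain ⟨n, -, hn⟩ := hX V'
  have h1 : i + j = n := hn _ ⟨φ.symm ≪≫ tensorIso eV eD ≪≫ tpowAdd X i j⟩
  have h2 : i + k = n := hn _ ⟨φ'.symm ≪≫ tensorIso eV eD' ≪≫ tpowAdd X i k⟩
  have hjk : j = k := Nat.add_left_cancel (h1.trans h2.symm)
  subst hjk
  have ψd : D ≅ D' := eD ≪≫ eD'.symm
  refine ⟨φ.symm ≪≫ whiskerLeftIso V ψd ≪≫ φ', ?_⟩
  have hcan : canL hI V D ≫ (V ◁ ψd.hom) = canL hI V D' := by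
    simp only [canL, Category.assoc, ← MonoidalCategory.whiskerLeft_comp]
    congr 2
    exact hI.hom_ext _ _
  calc f ≫ (φ.symm ≪≫ whiskerLeftIso V ψd ≪≫ φ').hom
      = (f ≫ φ.inv) ≫ (V ◁ ψd.hom) ≫ φ'.hom := by
        simp [Iso.trans_hom, whiskerLeftIso]
    _ = canL hI V D ≫ (V ◁ ψd.hom) ≫ φ'.hom := by
        rw [← hφL]; simp
    _ = canL hI V D' ≫ φ'.hom := by rw [← Category.assoc, hcan]
    _ = g := hL'
end

section
/- Let (A,⊛) be a complemented category and V, V' objects of A. The map φ: Aut_A(V) × Aut_A(V') → Aut_A(V⊛V') given by φ(f,g) = f⊛g is an injective group homomorphism. -/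
open CategoryTheory CategoryTheory.Limits CategoryTheory.MonoidalCategory

universe u v

variable {A : Type u} [Category.{v} A] [MonoidalCategory A]

/-- In a complemented category, the map
`Aut(V) × Aut(V') → Aut(V ⊗ V')`, `(f, g) ↦ f ⊗ g`, is an injective group
homomorphism. -/
theorem tensor_aut_injective_hom [SymmetricCategory A]
    (hA : ComplementedCategory A) (V V' : A)
    (φ : Aut V × Aut V' → Aut (V ⊗ V'))
    (hφ : ∀ p : Aut V × Aut V', φ p = tensorIso p.1 p.2) :
    Function.Injective φ ∧ ∀ p q : Aut V × Aut V', φ (p * q) = φ p * φ q := by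
  obtain ⟨hI⟩ := hA.unitInitial
  have keyL : ∀ (f : V ⟶ V) (g : V' ⟶ V'),
      canL hI V V' ≫ (f ⊗ₘ g) = f ≫ canL hI V V' := by
    intro f g
    have h : hI.to V' ≫ g = hI.to V' := hI.hom_ext _ _
    unfold canL; rw [Category.assoc, MonoidalCategory.tensorHom_def, ← Category.assoc (V ◁ hI.to V'),
      whisker_exchange, Category.assoc, ← MonoidalCategory.whiskerLeft_comp, h,
      ← Category.assoc, ← MonoidalCategory.rightUnitor_inv_naturality, Category.assoc]
  have keyR : ∀ (f : V ⟶ V) (g : V' ⟶ V'),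
      canR hI V V' ≫ (f ⊗ₘ g) = g ≫ canR hI V V' := by
    intro f g
    have h : hI.to V ≫ f = hI.to V := hI.hom_ext _ _
    unfold canR; rw [Category.assoc, tensorHom_def', ← Category.assoc (hI.to V ▷ V'),
      ← whisker_exchange, Category.assoc, ← MonoidalCategory.comp_whiskerRight, h,
      ← Category.assoc, ← MonoidalCategory.leftUnitor_inv_naturality, Category.assoc]
  constructor
  · intro p q hpq
    rw [hφ p, hφ q] at hpq
    have hhom : (p.1.hom ⊗ₘ p.2.hom) = (q.1.hom ⊗ₘ q.2.hom) := congrArg Iso.hom hpq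
    haveI := hA.mono (canL hI V V')
    haveI := hA.mono (canR hI V V')
    have h1 : p.1.hom = q.1.hom := by
      have := (keyL p.1.hom p.2.hom).symm.trans
        ((congrArg (canL hI V V' ≫ ·) hhom).trans (keyL q.1.hom q.2.hom))
      exact (cancel_mono (canL hI V V')).mp this
    have h2 : p.2.hom = q.2.hom := by
      have := (keyR p.1.hom p.2.hom).symm.trans
        ((congrArg (canR hI V V' ≫ ·) hhom).trans (keyR q.1.hom q.2.hom))
      exact (cancel_mono (canR hI V V')).mp this
    exact Prod.ext (Iso.ext h1) (Iso.ext h2)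
  · intro p q
    rw [hφ, hφ, hφ]
    ext
    show _ = (q.1 ⊗ᵢ q.2).hom ≫ (p.1 ⊗ᵢ p.2).hom
    exact (tensorHom_comp_tensorHom (q.1.hom) (q.2.hom) (p.1.hom) (p.2.hom)).symm
end

section
/- Let (A,⊛) be a complemented category, V, V' objects, and let i: V → V⊛V' and i': V' → V⊛V' be the canonical morphisms. Then the subgroup of Aut_A(V⊛V') of automorphisms η with η∘i = i equals the image of id_V × Aut_A(V') under the homomorphism (f,g) ↦ f⊛g, and is hence isomorphic to Aut_A(V'). -/
open CategoryTheory CategoryTheory.Limits CategoryTheory.MonoidalCategory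

universe u v

variable {A : Type u} [Category.{v} A] [MonoidalCategory A]

private lemma canL_whisker' (hI : IsInitial (𝟙_ A)) (V V' : A) (g : V' ⟶ V') :
    canL hI V V' ≫ (V ◁ g) = canL hI V V' := by
  simp [canL, ← MonoidalCategory.whiskerLeft_comp, hI.hom_ext (hI.to V' ≫ g) (hI.to V')]

private lemma canR_whisker' (hI : IsInitial (𝟙_ A)) (V V' : A) (g : V' ⟶ V') :
    canR hI V V' ≫ (V ◁ g) = g ≫ canR hI V V' := by
  simp only [canR, Category.assoc]
  rw [← MonoidalCategory.whisker_exchange, ← MonoidalCategory.leftUnitor_inv_naturality_assoc]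

/-- In a complemented category, with `i : V ⟶ V ⊗ V'` the canonical morphism,
the automorphisms `η` of `V ⊗ V'` satisfying `η ∘ i = i` are precisely those
of the form `id_V ⊗ g` for `g ∈ Aut(V')`; moreover `g ↦ id_V ⊗ g` is
injective, so this subgroup is isomorphic to `Aut(V')`. -/
theorem stabilizer_of_canonical_eq_aut [SymmetricCategory A]
    (hA : ComplementedCategory A) (V V' : A) (hI : IsInitial (𝟙_ A)) :
    (∀ η : Aut (V ⊗ V'),
        canL hI V V' ≫ η.hom = canL hI V V' ↔
          ∃ g : Aut V', η = tensorIso (Iso.refl V) g) ∧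
    Function.Injective
      (fun g : Aut V' => (tensorIso (Iso.refl V) g : Aut (V ⊗ V'))) := by
  constructor
  · intro η
    constructor
    · intro h
      have h1 : IsComplement hI (canL hI V V') (canR hI V V' ≫ η.hom) :=
        ⟨(η : V ⊗ V' ≅ V ⊗ V'), h, rfl⟩
      have h2 : IsComplement hI (canL hI V V') (canR hI V V') :=
        ⟨Iso.refl _, by simp, by simp⟩
      obtain ⟨ψ, hψ⟩ := hA.compl_unique hI (canL hI V V') _ _ h1 h2
      refine ⟨ψ, Iso.ext ?_⟩
      refine hA.hom_ext hI _ _ ?_ ?_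
      · rw [h]
        simp [canL_whisker']
      · simp only [tensorIso_hom, Iso.refl_hom, MonoidalCategory.id_tensorHom]
        rw [canR_whisker', hψ]
    · rintro ⟨g, rfl⟩
      exact (congrArg (canL hI V V' ≫ ·) ((fun (k : V' ≅ V') => (by simp only [tensorIso_hom, Iso.refl_hom, MonoidalCategory.id_tensorHom] : (tensorIso (Iso.refl V) k).hom = V ◁ k.hom)) g)).trans (canL_whisker' hI V V' g.hom)
  · intro g g' h
    have h' : V ◁ g.hom = V ◁ g'.hom := by
      have := congrArg Iso.hom h
      exact ((fun (k : V' ≅ V') => (by simp only [tensorIso_hom, Iso.refl_hom, MonoidalCategory.id_tensorHom] : (tensorIso (Iso.refl V) k).hom = V ◁ k.hom)) g).symm.trans (this.trans ((fun (k : V' ≅ V') => (by simp only [tensorIso_hom, Iso.refl_hom, MonoidalCategory.id_tensorHom] : (tensorIso (Iso.refl V) k).hom = V ◁ k.hom)) g'))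
    have hc : g.hom ≫ canR hI V V' = g'.hom ≫ canR hI V V' := by
      rw [← canR_whisker', ← canR_whisker', h']
    have : Mono (canR hI V V') := hA.mono _
    rw [cancel_mono] at hc
    exact Iso.ext hc
end
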